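/- Let t_1, ..., t_n be a basis of ℝ^n, let X_i = span{t_j : j ≠ i}, and consider the collection of walls consisting of all ℤ-translates {X_i + k t_i : k ∈ ℤ, 1 ≤ i ≤ n}. Then for any two points r_1, r_2 ∈ ℝ^n, writing r_1 - r_2 = Σ ν_i t_i, the number of walls separating r_1 from r_2 is at least Σ_i |ν_i| - n, and consequently ‖r_1 - r_2‖ ≤ max_i ‖t_i‖ · (#(r_1,r_2) + n), establishing the linear separation property. -/

import Mathlib

/-- The walls of the standard cubulation: for a basis `t` of `ℝⁿ`, the wall
indexed by `(i, k)` is the affine hyperplane `span{t_j : j ≠ i} + k tᵢ`; it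
separates `r₁` from `r₂` when their `i`-th coordinates lie strictly on opposite
sides of `k`. -/
def sepWalls {n : ℕ} (t : Module.Basis (Fin n) ℝ (EuclideanSpace ℝ (Fin n)))
    (r₁ r₂ : EuclideanSpace ℝ (Fin n)) : Set (Fin n × ℤ) :=
  {p | (t.repr r₁ p.1 < (p.2 : ℝ) ∧ (p.2 : ℝ) < t.repr r₂ p.1) ∨
       (t.repr r₂ p.1 < (p.2 : ℝ) ∧ (p.2 : ℝ) < t.repr r₁ p.1)}

/-- for the standard cubulation walls built from a basis
`t₁, …, tₙ` of `ℝⁿ`, writing `r₁ - r₂ = Σ νᵢ tᵢ`, the number `#(r₁,r₂)` of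
walls separating `r₁` from `r₂` satisfies `Σᵢ |νᵢ| - n ≤ #(r₁,r₂)`, and
consequently `‖r₁ - r₂‖ ≤ (maxᵢ ‖tᵢ‖) · (#(r₁,r₂) + n)`: the linear separation
property holds. -/
theorem standard_cubulation_linear_separation
    (n : ℕ) (t : Module.Basis (Fin n) ℝ (EuclideanSpace ℝ (Fin n)))
    (r₁ r₂ : EuclideanSpace ℝ (Fin n)) :
    (sepWalls t r₁ r₂).Finite ∧
    (∑ i : Fin n, |t.repr (r₁ - r₂) i|) - n ≤ ((sepWalls t r₁ r₂).ncard : ℝ) ∧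
    ‖r₁ - r₂‖ ≤ (⨆ i : Fin n, ‖t i‖) * (((sepWalls t r₁ r₂).ncard : ℝ) + n) := by
  classical
  set a : Fin n → ℝ := fun i => t.repr r₁ i with ha
  set b : Fin n → ℝ := fun i => t.repr r₂ i with hb
  set m : Fin n → ℝ := fun i => min (a i) (b i) with hm
  set M : Fin n → ℝ := fun i => max (a i) (b i) with hM
  set T : Fin n → Finset ℤ := fun i => Finset.Icc (⌊m i⌋ + 1) (⌈M i⌉ - 1) with hT
  have hmem : ∀ (i : Fin n) (k : ℤ), k ∈ T i ↔
      ((a i < (k : ℝ) ∧ (k : ℝ) < b i) ∨ (b i < (k : ℝ) ∧ (k : ℝ) < a i)) := by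
    intro i k
    simp only [hT, Finset.mem_Icc]
    constructor
    · rintro ⟨h1, h2⟩
      have hmk : m i < (k : ℝ) := Int.floor_lt.mp (by omega)
      have hkM : (k : ℝ) < M i := by
        have h3 : (k : ℝ) ≤ (⌈M i⌉ : ℝ) - 1 := by
          have : k ≤ ⌈M i⌉ - 1 := by omega
          exact_mod_cast this
        have h4 : (⌈M i⌉ : ℝ) - 1 < M i := by
          have := Int.ceil_lt_add_one (M i); linarith
        linarith
      rcases lt_trichotomy (a i) (b i) with h | h | h
      · left
        constructor
        · calc a i = m i := (min_eq_left h.le).symm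
            _ < k := hmk
        · calc (k : ℝ) < M i := hkM
            _ = b i := max_eq_right h.le
      · exfalso
        have : m i = M i := by simp [hm, hM, h]
        linarith
      · right
        constructor
        · calc b i = m i := (min_eq_right h.le).symm
            _ < k := hmk
        · calc (k : ℝ) < M i := hkM
            _ = a i := max_eq_left h.le
    · rintro (⟨h1, h2⟩ | ⟨h1, h2⟩)
      · have hmk : m i < (k : ℝ) := lt_of_le_of_lt (min_le_left _ _) h1
        have hkM : (k : ℝ) < M i := lt_of_lt_of_le h2 (le_max_right _ _)
        have h5 : ⌊m i⌋ < k := Int.floor_lt.mpr hmk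
        have h6 : k < ⌈M i⌉ := Int.lt_ceil.mpr hkM
        omega
      · have hmk : m i < (k : ℝ) := lt_of_le_of_lt (min_le_right _ _) h1
        have hkM : (k : ℝ) < M i := lt_of_lt_of_le h2 (le_max_left _ _)
        have h5 : ⌊m i⌋ < k := Int.floor_lt.mpr hmk
        have h6 : k < ⌈M i⌉ := Int.lt_ceil.mpr hkM
        omega
  set W : Finset (Fin n × ℤ) :=
    Finset.univ.biUnion (fun i => (T i).image (fun k => (i, k))) with hW
  have hset : sepWalls t r₁ r₂ = ↑W := by
    ext ⟨i, k⟩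
    simp only [sepWalls, Set.mem_setOf_eq, hW, Finset.coe_biUnion, Set.mem_iUnion,
      Finset.mem_coe, Finset.mem_image, Finset.mem_univ, Set.iUnion_true, Prod.mk.injEq]
    constructor
    · intro h
      exact ⟨i, k, (hmem i k).mpr h, rfl, rfl⟩
    · rintro ⟨j, l, hl, rfl, rfl⟩
      exact (hmem j l).mp hl
  have hfin : (sepWalls t r₁ r₂).Finite := by rw [hset]; exact W.finite_toSet
  have hncard : (sepWalls t r₁ r₂).ncard = W.card := by
    rw [hset, Set.ncard_coe_finset]
  have hWcard : W.card = ∑ i : Fin n, (T i).card := by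
    rw [hW, Finset.card_biUnion]
    · refine Finset.sum_congr rfl fun i _ => ?_
      exact Finset.card_image_of_injective _ (fun x y hxy => by
        simpa using congrArg Prod.snd hxy)
    · intro i _ j _ hij
      simp only [Finset.disjoint_left, Finset.mem_image]
      rintro ⟨p, q⟩ ⟨k, _, hk⟩ ⟨l, _, hl⟩
      apply hij
      have := congrArg Prod.fst hk
      have := congrArg Prod.fst hl
      simp_all
  have hTi : ∀ i : Fin n, |t.repr (r₁ - r₂) i| - 1 ≤ ((T i).card : ℝ) := by
    intro i
    have hnu : t.repr (r₁ - r₂) i = a i - b i := by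
      simp [ha, hb, map_sub]
    have habs : |t.repr (r₁ - r₂) i| = M i - m i := by
      rw [hnu]
      simp only [hM, hm]
      rw [abs_sub_comm]
      exact (max_sub_min_eq_abs (a i) (b i)).symm
    have hcard : (T i).card = (⌈M i⌉ - 1 + 1 - (⌊m i⌋ + 1)).toNat := by
      simp [hT, Int.card_Icc]
    have h1 : ((⌈M i⌉ - 1 + 1 - (⌊m i⌋ + 1)) : ℝ) ≤ ((T i).card : ℝ) := by
      rw [hcard]
      have := Int.self_le_toNat (⌈M i⌉ - 1 + 1 - (⌊m i⌋ + 1))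
      exact_mod_cast this
    have h2 : M i - m i - 1 ≤ ((⌈M i⌉ - 1 + 1 - (⌊m i⌋ + 1)) : ℝ) := by
      have hc := Int.le_ceil (M i)
      have hf := Int.floor_le (m i)
      linarith
    rw [habs]
    linarith
  have hlb : (∑ i : Fin n, |t.repr (r₁ - r₂) i|) - n ≤ ((sepWalls t r₁ r₂).ncard : ℝ) := by
    rw [hncard, hWcard]
    push_cast
    calc (∑ i : Fin n, |t.repr (r₁ - r₂) i|) - n
        = ∑ i : Fin n, (|t.repr (r₁ - r₂) i| - 1) := by
          rw [Finset.sum_sub_distrib]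
          simp
      _ ≤ ∑ i : Fin n, ((T i).card : ℝ) := Finset.sum_le_sum fun i _ => hTi i
  refine ⟨hfin, hlb, ?_⟩
  have hsum : (∑ i : Fin n, |t.repr (r₁ - r₂) i|) ≤ ((sepWalls t r₁ r₂).ncard : ℝ) + n := by
    linarith
  rcases Nat.eq_zero_or_pos n with hn | hn
  · subst hn
    have h0 : r₁ - r₂ = 0 := Subsingleton.elim _ _
    have hsup : (⨆ i : Fin 0, ‖t i‖) = 0 := by
      simp [Real.iSup_of_isEmpty]
    simp [h0, hsup]
  · set C := ⨆ i : Fin n, ‖t i‖ with hC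
    have hCle : ∀ i : Fin n, ‖t i‖ ≤ C :=
      fun i => le_ciSup (f := fun i : Fin n => ‖t i‖) (Set.Finite.bddAbove (Set.finite_range _)) i
    have hC0 : 0 ≤ C := le_trans (norm_nonneg _) (hCle ⟨0, hn⟩)
    calc ‖r₁ - r₂‖ = ‖∑ i : Fin n, t.repr (r₁ - r₂) i • t i‖ := by
          rw [Module.Basis.sum_repr]
      _ ≤ ∑ i : Fin n, ‖t.repr (r₁ - r₂) i • t i‖ := norm_sum_le _ _
      _ = ∑ i : Fin n, |t.repr (r₁ - r₂) i| * ‖t i‖ := by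
          simp [norm_smul, Real.norm_eq_abs]
      _ ≤ ∑ i : Fin n, |t.repr (r₁ - r₂) i| * C :=
          Finset.sum_le_sum fun i _ =>
            mul_le_mul_of_nonneg_left (hCle i) (abs_nonneg _)
      _ = (∑ i : Fin n, |t.repr (r₁ - r₂) i|) * C := by rw [← Finset.sum_mul]
      _ ≤ (((sepWalls t r₁ r₂).ncard : ℝ) + n) * C :=
          mul_le_mul_of_nonneg_right hsum hC0
      _ = C * (((sepWalls t r₁ r₂).ncard : ℝ) + n) := mul_comm _ _
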